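/- Let R be an integral domain in which 2 ≠ 0, and let Rⁿ = ⊕_i W_i and Rⁿ = ⊕_j W'_j be two direct sum decompositions into free submodules, each with at least two nonzero summands. Then every element of the subgroup ∏_i GL(W_i) ⊆ GL_n(R) (automorphisms preserving every W_i) maps each W'_j into itself if and only if the decomposition ⊕_i W_i refines ⊕_j W'_j, i.e. every W_i is contained in some W'_j. -/

import Mathlib

open Submodule LinearMap

section Helpers

variable {R : Type*} [CommRing R] {M : Type*} [AddCommGroup M] [Module R M]

/-- Uniqueness part of a direct sum decomposition: if a finite family of members of
independent submodules sums to zero, each member is zero. -/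
lemma AL_eq_zero_of_sum_eq_zero {J : Type*} [Fintype J] {W : J → Submodule R M}
    (hind : iSupIndep W) (y : J → M) (hy : ∀ j, y j ∈ W j)
    (hsum : ∑ j, y j = 0) (j : J) : y j = 0 := by
  classical
  have h1 : y j + ∑ j' ∈ Finset.univ.erase j, y j' = 0 := by
    rwa [Finset.add_sum_erase _ y (Finset.mem_univ j)]
  have h2 : y j = -∑ j' ∈ Finset.univ.erase j, y j' := by
    linear_combination (norm := abel) h1
  have hmem : y j ∈ ⨆ (j') (_ : j' ≠ j), W j' := by
    rw [h2]
    refine neg_mem (Submodule.sum_mem _ fun j' hj' => ?_)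
    have hne : j' ≠ j := Finset.ne_of_mem_erase hj'
    exact (le_iSup₂ (f := fun (j' : J) (_ : j' ≠ j) => W j') j' hne) (hy j')
  exact (Submodule.disjoint_def.mp (hind j)) _ (hy j) hmem

/-- Existence part: any element decomposes as a finite sum of members. -/
lemma AL_exists_components {J : Type*} [Fintype J] (W : J → Submodule R M)
    (hsup : iSup W = ⊤) (x : M) :
    ∃ y : J → M, (∀ j, y j ∈ W j) ∧ ∑ j, y j = x := by
  have hx : x ∈ iSup W := hsup ▸ Submodule.mem_top
  rw [Submodule.mem_iSup_iff_exists_finsupp] at hx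
  obtain ⟨f, hf, hsum⟩ := hx
  refine ⟨f, hf, ?_⟩
  rwa [Finsupp.sum_fintype _ _ (fun _ => rfl)] at hsum

lemma AL_isCompl {I : Type*} {W : I → Submodule R M} (hind : iSupIndep W)
    (hsup : iSup W = ⊤) (i : I) :
    IsCompl (W i) (⨆ (k) (_ : k ≠ i), W k) := by
  refine ⟨hind i, codisjoint_iff.mpr ?_⟩
  rw [← top_le_iff, ← hsup]
  refine iSup_le fun k => ?_
  rcases eq_or_ne k i with rfl | hk
  · exact le_sup_left
  · exact le_trans (le_iSup₂ (f := fun (k : I) (_ : k ≠ i) => W k) k hk) le_sup_right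

/-- Existence of an `R`-valued functional separating `u` from a submodule `N` of `Rⁿ`,
provided no nonzero multiple of `u` lies in `N`. -/
lemma AL_exists_functional {R : Type*} [CommRing R] [IsDomain R] {n : ℕ}
    (N : Submodule R (Fin n → R)) {u : Fin n → R}
    (hu : ∀ d : R, d ≠ 0 → d • u ∉ N) :
    ∃ g : (Fin n → R) →ₗ[R] R, (∀ w ∈ N, g w = 0) ∧ g u ≠ 0 := by
  classical
  set K := FractionRing R
  set f : (Fin n → R) →ₗ[R] (Fin n → K) :=
    LinearMap.pi (fun m => (Algebra.linearMap R K).comp (LinearMap.proj m)) with hf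
  have hfapply : ∀ x m, f x m = algebraMap R K (x m) := fun x m => rfl
  have hfinj : Function.Injective f := by
    intro x y hxy
    funext m
    exact IsFractionRing.injective R K (congrFun hxy m)
  set S : Submodule K (Fin n → K) := Submodule.span K (f '' (N : Set (Fin n → R))) with hS
  -- clearing denominators in `S`
  have hclear : ∀ x ∈ S, ∃ d : R, d ≠ 0 ∧ ∃ w ∈ N, algebraMap R K d • x = f w := by
    intro x hx
    refine Submodule.span_induction ?_ ?_ ?_ ?_ hx
    · rintro _ ⟨w, hw, rfl⟩
      exact ⟨1, one_ne_zero, w, hw, by simp⟩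
    · exact ⟨1, one_ne_zero, 0, zero_mem _, by simp⟩
    · rintro x y - - ⟨dx, hdx, wx, hwx, hx'⟩ ⟨dy, hdy, wy, hwy, hy'⟩
      refine ⟨dx * dy, mul_ne_zero hdx hdy, dy • wx + dx • wy,
        add_mem (Submodule.smul_mem _ _ hwx) (Submodule.smul_mem _ _ hwy), ?_⟩
      rw [map_add, map_smul, map_smul, ← IsScalarTower.algebraMap_smul K dy (f wx),
        ← IsScalarTower.algebraMap_smul K dx (f wy), ← hx', ← hy', map_mul,
        smul_add, smul_smul, smul_smul,
        mul_comm ((algebraMap R K) dx) ((algebraMap R K) dy)]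
    · rintro c x - ⟨d, hd, w, hw, hx'⟩
      obtain ⟨a, b, hb, rfl⟩ : ∃ (a b : R), b ∈ nonZeroDivisors R ∧ c = algebraMap R K a / algebraMap R K b := by
        obtain ⟨⟨a, b⟩, h⟩ := IsLocalization.surj (nonZeroDivisors R) c
        refine ⟨a, b, b.prop, ?_⟩
        rw [eq_div_iff (IsFractionRing.to_map_ne_zero_of_mem_nonZeroDivisors b.prop)]
        exact h
      have hb0 : b ≠ 0 := nonZeroDivisors.ne_zero hb
      have hbK : algebraMap R K b ≠ 0 := by
        simpa using fun h => hb0 (IsFractionRing.injective R K (by simpa using h))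
      refine ⟨b * d, mul_ne_zero hb0 hd, a • w, Submodule.smul_mem _ _ hw, ?_⟩
      rw [map_smul, ← IsScalarTower.algebraMap_smul K a (f w), ← hx', map_mul,
        smul_smul, smul_smul]
      congr 1
      linear_combination (algebraMap R K a * algebraMap R K d) * mul_inv_cancel₀ hbK
  -- `f u ∉ S`
  have hfu : f u ∉ S := by
    intro h
    obtain ⟨d, hd, w, hw, heq⟩ := hclear _ h
    rw [IsScalarTower.algebraMap_smul K d (f u), ← map_smul] at heq
    exact hu d hd (hfinj heq ▸ hw)
  -- a `K`-functional killing `S` and not `f u`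
  obtain ⟨gK, hgKu, hgKS⟩ := S.exists_dual_map_eq_bot_of_notMem hfu inferInstance
  have hgK0 : ∀ x ∈ S, gK x = 0 := by
    intro x hx
    have : gK x ∈ S.map gK := Submodule.mem_map_of_mem hx
    rwa [hgKS, Submodule.mem_bot] at this
  -- clear denominators of `gK ∘ f` on the standard basis
  obtain ⟨b, hb⟩ := IsLocalization.exist_integer_multiples_of_finite (nonZeroDivisors R)
    (fun m : Fin n => gK (f (Pi.single m (1 : R))))
  choose c hc using hb
  set g : (Fin n → R) →ₗ[R] R := ∑ m, (c m) • LinearMap.proj m with hg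
  have hgapply : ∀ x : Fin n → R, g x = ∑ m, c m * x m := by
    intro x
    simp [hg, LinearMap.sum_apply, smul_eq_mul]
  have keyz : ∀ x : Fin n → R, algebraMap R K (g x) = (b : R) • gK (f x) := by
    intro x
    have hx : x = ∑ m, x m • (Pi.single m (1 : R) : Fin n → R) := by
      funext m'
      simp [Finset.sum_apply, Pi.single_apply]
    calc algebraMap R K (g x) = ∑ m, algebraMap R K (x m) * algebraMap R K (c m) := by
          rw [hgapply, map_sum]
          exact Finset.sum_congr rfl fun m _ => by rw [map_mul, mul_comm]
      _ = ∑ m, algebraMap R K (x m) * ((b : R) • gK (f (Pi.single m 1))) := by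
          refine Finset.sum_congr rfl fun m _ => ?_
          rw [← hc m]
      _ = (b : R) • gK (f x) := by
          conv_rhs => rw [hx]
          rw [map_sum, map_sum, Finset.smul_sum]
          refine Finset.sum_congr rfl fun m _ => ?_
          rw [LinearMap.map_smul_of_tower, LinearMap.map_smul_of_tower]
          simp only [Algebra.smul_def]
          ring
  have hb0 : (b : R) ≠ 0 := nonZeroDivisors.ne_zero b.prop
  have hbK : algebraMap R K (b : R) ≠ 0 := by
    intro h
    exact hb0 (IsFractionRing.injective R K (by simpa using h))
  refine ⟨g, ?_, ?_⟩
  · intro w hw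
    have hfw : f w ∈ S := Submodule.subset_span ⟨w, hw, rfl⟩
    have : algebraMap R K (g w) = 0 := by
      rw [keyz, hgK0 _ hfw, smul_zero]
    exact IsFractionRing.injective R K (by simpa using this)
  · intro h
    have : algebraMap R K (g u) = 0 := by rw [h, map_zero]
    rw [keyz, Algebra.smul_def] at this
    exact hgKu (by
      rcases mul_eq_zero.mp this with h' | h'
      · exact absurd h' hbK
      · exact h')

/-- The "sign" automorphism: `-1` on a direct summand, `1` on a complement. -/
def AL_signEquiv (P : M →ₗ[R] M) (hPP : ∀ x, P (P x) = P x) : M ≃ₗ[R] M := by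
  refine LinearEquiv.ofLinear (LinearMap.id - (2 : R) • P) (LinearMap.id - (2 : R) • P) ?_ ?_ <;>
  · ext x
    simp only [LinearMap.comp_apply, LinearMap.sub_apply, LinearMap.id_apply,
      LinearMap.smul_apply, map_sub, map_smul, hPP, LinearMap.id_coe, id_eq]
    module

lemma AL_signEquiv_apply (P : M →ₗ[R] M) (hPP : ∀ x, P (P x) = P x) (x : M) :
    AL_signEquiv P hPP x = x - (2 : R) • P x := rfl

/-- The "transvection" automorphism `x ↦ x + g x • v`, for `g v = 0`. -/
def AL_transvection (g : M →ₗ[R] R) (v : M) (hgv : g v = 0) : M ≃ₗ[R] M := by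
  refine LinearEquiv.ofLinear (LinearMap.id + g.smulRight v) (LinearMap.id - g.smulRight v) ?_ ?_ <;>
  · ext x
    simp only [LinearMap.comp_apply, LinearMap.add_apply, LinearMap.sub_apply,
      LinearMap.id_apply, LinearMap.smulRight_apply, map_sub, map_add, map_smul,
      hgv, smul_eq_mul, mul_zero, smul_zero, LinearMap.id_coe, id_eq]
    module

lemma AL_transvection_apply (g : M →ₗ[R] R) (v : M) (hgv : g v = 0) (x : M) :
    AL_transvection g v hgv x = x + g x • v := rfl

end Helpers

/-- (Arone–Lesh) Let `R` be an integral domain with `2 ≠ 0` and let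
`Rⁿ = ⊕ᵢ Wᵢ` and `Rⁿ = ⊕ⱼ W'ⱼ` be two direct sum decompositions into free
submodules, each with at least two nonzero summands. Then every automorphism
preserving all the `Wᵢ` maps each `W'ⱼ` into itself iff the decomposition
`⊕ᵢ Wᵢ` refines `⊕ⱼ W'ⱼ`. -/
theorem fixed_decomposition_iff_refines
    {R : Type*} [CommRing R] [IsDomain R] (h2 : (2 : R) ≠ 0)
    {n : ℕ} {I J : Type*} [Fintype I] [Fintype J]
    (W : I → Submodule R (Fin n → R)) (W' : J → Submodule R (Fin n → R))
    (hWfree : ∀ i, Module.Free R (W i)) (hW'free : ∀ j, Module.Free R (W' j))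
    (hWind : iSupIndep W) (hWsup : iSup W = ⊤)
    (hW'ind : iSupIndep W') (hW'sup : iSup W' = ⊤)
    (hWtwo : ∃ i i', i ≠ i' ∧ W i ≠ ⊥ ∧ W i' ≠ ⊥)
    (hW'two : ∃ j j', j ≠ j' ∧ W' j ≠ ⊥ ∧ W' j' ≠ ⊥) :
    (∀ φ : (Fin n → R) ≃ₗ[R] (Fin n → R),
        (∀ i, (W i).map (φ : (Fin n → R) →ₗ[R] (Fin n → R)) = W i) →
        ∀ j, (W' j).map (φ : (Fin n → R) →ₗ[R] (Fin n → R)) ≤ W' j) ↔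
      ∀ i, ∃ j, W i ≤ W' j := by
  classical
  constructor
  · -- hard direction
    intro hfix i
    obtain ⟨ja, jb, hjab, hja, hjb⟩ := hW'two
    by_cases hbot : W i = ⊥
    · exact ⟨ja, by rw [hbot]; exact bot_le⟩
    -- the projection onto `W i`
    have hcompl := AL_isCompl hWind hWsup i
    set P : (Fin n → R) →ₗ[R] (Fin n → R) :=
      (W i).subtype ∘ₗ Submodule.projectionOnto _ _ hcompl with hP
    have hPmem : ∀ x, P x ∈ W i := fun x => ((Submodule.projectionOnto _ _ hcompl) x).2
    have hPWi : ∀ x ∈ W i, P x = x := by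
      intro x hx
      simp [hP, Submodule.projectionOnto_apply_left hcompl ⟨x, hx⟩]
    have hPother : ∀ x ∈ (⨆ (k) (_ : k ≠ i), W k), P x = 0 := by
      intro x hx
      simp [hP, Submodule.projectionOnto_apply_of_mem_right hcompl hx]
    have hPP : ∀ x, P (P x) = P x := fun x => hPWi _ (hPmem x)
    -- the sign automorphism
    set φ₁ := AL_signEquiv P hPP with hφ₁
    have hφ₁Wi : ∀ x ∈ W i, φ₁ x = -x := by
      intro x hx
      rw [hφ₁, AL_signEquiv_apply, hPWi x hx, two_smul]
      abel
    have hφ₁other : ∀ k, k ≠ i → ∀ x ∈ W k, φ₁ x = x := by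
      intro k hk x hx
      have : x ∈ ⨆ (k) (_ : k ≠ i), W k :=
        (le_iSup₂ (f := fun (k : I) (_ : k ≠ i) => W k) k hk) hx
      rw [hφ₁, AL_signEquiv_apply, hPother x this, smul_zero, sub_zero]
    have hφ₁W : ∀ k, (W k).map (φ₁ : (Fin n → R) →ₗ[R] (Fin n → R)) = W k := by
      intro k
      rcases eq_or_ne k i with rfl | hk
      · apply le_antisymm
        · rintro _ ⟨x, hx, rfl⟩
          simp only [LinearEquiv.coe_coe]
          rw [hφ₁Wi x hx]
          exact neg_mem hx
        · intro x hx
          refine ⟨-x, neg_mem hx, ?_⟩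
          simp only [LinearEquiv.coe_coe]
          rw [hφ₁Wi _ (neg_mem hx), neg_neg]
      · apply le_antisymm
        · rintro _ ⟨x, hx, rfl⟩
          simp only [LinearEquiv.coe_coe]
          rw [hφ₁other k hk x hx]; exact hx
        · intro x hx
          refine ⟨x, hx, ?_⟩
          simp only [LinearEquiv.coe_coe]
          exact hφ₁other k hk x hx
    have hfix₁ := hfix φ₁ hφ₁W
    -- Step A: components (along W') of elements of W i stay in W i
    have stepA : ∀ x ∈ W i, ∀ y : J → (Fin n → R), (∀ j, y j ∈ W' j) →
        (∑ j, y j = x) → ∀ j, y j ∈ W i := by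
      intro x hx y hy hsum j
      have hz : ∀ j, φ₁ (y j) + y j ∈ W' j := by
        intro j
        exact add_mem (hfix₁ j ⟨y j, hy j, rfl⟩) (hy j)
      have hzsum : ∑ j, (φ₁ (y j) + y j) = 0 := by
        rw [Finset.sum_add_distrib, ← map_sum, hsum, hφ₁Wi x hx]
        abel
      have hzj := AL_eq_zero_of_sum_eq_zero hW'ind _ hz hzsum j
      -- φ₁ (y j) = - y j, i.e. 2 • (y j - P (y j)) = 0
      rw [hφ₁, AL_signEquiv_apply] at hzj
      rw [two_smul] at hzj
      have h2z : (2 : R) • (y j - P (y j)) = 0 := by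
        rw [smul_sub, two_smul, two_smul]
        linear_combination (norm := abel) hzj
      have : y j - P (y j) = 0 := by
        rcases smul_eq_zero.mp h2z with h | h
        · exact absurd h h2
        · exact h
      have : y j = P (y j) := by linear_combination (norm := abel) this
      rw [this]
      exact hPmem _
    -- get a nonzero element u of W i with u ∈ W' j0
    obtain ⟨x0, hx0, hx0ne⟩ := Submodule.ne_bot_iff (W i) |>.mp hbot
    obtain ⟨y0, hy0, hy0sum⟩ := AL_exists_components W' hW'sup x0
    have : ∃ j0, y0 j0 ≠ 0 := by
      by_contra h
      push_neg at h
      apply hx0ne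
      rw [← hy0sum]
      exact Finset.sum_eq_zero fun j _ => h j
    obtain ⟨j0, hj0ne⟩ := this
    set u := y0 j0 with hu
    have huWi : u ∈ W i := stepA x0 hx0 y0 hy0 hy0sum j0
    have huW' : u ∈ W' j0 := hy0 j0
    refine ⟨j0, ?_⟩
    -- Step B: no nonzero element of W i has a component in another W' j₁
    have stepB : ∀ j1, j1 ≠ j0 → ∀ v, v ∈ W i → v ∈ W' j1 → v = 0 := by
      intro j1 hj1 v hvWi hvW'
      by_contra hvne
      -- build the functional g
      set N : Submodule R (Fin n → R) := (⨆ (k) (_ : k ≠ i), W k) ⊔ (R ∙ v) with hN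
      have hNu : ∀ d : R, d ≠ 0 → d • u ∉ N := by
        intro d hd hmem
        rw [hN, Submodule.mem_sup] at hmem
        obtain ⟨w, hw, z, hz, heq⟩ := hmem
        obtain ⟨c, rfl⟩ := Submodule.mem_span_singleton.mp hz
        -- d • u - c • v = w ∈ W i ⊓ (⨆ k ≠ i, W k) = ⊥
        have hsub : d • u - c • v ∈ W i :=
          sub_mem (Submodule.smul_mem _ _ huWi) (Submodule.smul_mem _ _ hvWi)
        have hsub' : d • u - c • v ∈ ⨆ (k) (_ : k ≠ i), W k := by
          have : d • u - c • v = w := by linear_combination (norm := abel) heq.symm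
          rw [this]; exact hw
        have hzero : d • u - c • v = 0 :=
          Submodule.disjoint_def.mp (hWind i) _ hsub hsub'
        have hdu : d • u = c • v := by linear_combination (norm := abel) hzero
        -- but d • u ∈ W' j0 and c • v ∈ W' j1, disjoint
        have h1 : d • u ∈ W' j0 := Submodule.smul_mem _ _ huW'
        have h2 : d • u ∈ W' j1 := hdu ▸ Submodule.smul_mem _ _ hvW'
        have hdisj : Disjoint (W' j0) (W' j1) :=
          hW'ind.pairwiseDisjoint (Ne.symm hj1)
        have : d • u = 0 := Submodule.disjoint_def.mp hdisj _ h1 h2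
        rcases smul_eq_zero.mp this with h | h
        · exact hd h
        · exact hj0ne h
      obtain ⟨g, hgN, hgu⟩ := AL_exists_functional N hNu
      have hgv : g v = 0 := hgN v (Submodule.mem_sup_right (Submodule.mem_span_singleton_self v))
      have hgother : ∀ k, k ≠ i → ∀ x ∈ W k, g x = 0 := by
        intro k hk x hx
        exact hgN x (Submodule.mem_sup_left
          ((le_iSup₂ (f := fun (k : I) (_ : k ≠ i) => W k) k hk) hx))
      set φ₂ := AL_transvection g v hgv with hφ₂
      have hφ₂W : ∀ k, (W k).map (φ₂ : (Fin n → R) →ₗ[R] (Fin n → R)) = W k := by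
        intro k
        rcases eq_or_ne k i with rfl | hk
        · apply le_antisymm
          · rintro _ ⟨x, hx, rfl⟩
            simp only [LinearEquiv.coe_coe]
            rw [hφ₂, AL_transvection_apply]
            exact add_mem hx (Submodule.smul_mem _ _ hvWi)
          · intro x hx
            refine ⟨x - g x • v, sub_mem hx (Submodule.smul_mem _ _ hvWi), ?_⟩
            simp only [LinearEquiv.coe_coe]
            rw [hφ₂, AL_transvection_apply]
            simp [hgv]
        · apply le_antisymm
          · rintro _ ⟨x, hx, rfl⟩
            simp only [LinearEquiv.coe_coe]
            rw [hφ₂, AL_transvection_apply, hgother k hk x hx, zero_smul, add_zero]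
            exact hx
          · intro x hx
            refine ⟨x, hx, ?_⟩
            simp only [LinearEquiv.coe_coe]
            rw [hφ₂, AL_transvection_apply, hgother k hk x hx, zero_smul, add_zero]
      have hfix₂ := hfix φ₂ hφ₂W j0
      have : φ₂ u ∈ W' j0 := hfix₂ ⟨u, huW', rfl⟩
      rw [hφ₂, AL_transvection_apply] at this
      have hguv : g u • v ∈ W' j0 := by
        have := sub_mem this huW'
        simpa using this
      have hguv' : g u • v ∈ W' j1 := Submodule.smul_mem _ _ hvW'
      have hdisj : Disjoint (W' j0) (W' j1) := hW'ind.pairwiseDisjoint (Ne.symm hj1)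
      have : g u • v = 0 := Submodule.disjoint_def.mp hdisj _ hguv hguv'
      rcases smul_eq_zero.mp this with h | h
      · exact hgu h
      · exact hvne h
    -- conclude: W i ≤ W' j0
    intro z hz
    obtain ⟨y, hy, hysum⟩ := AL_exists_components W' hW'sup z
    have hyWi : ∀ j, y j ∈ W i := stepA z hz y hy hysum
    have hyzero : ∀ j, j ≠ j0 → y j = 0 := fun j hj => stepB j hj (y j) (hyWi j) (hy j)
    have : z = y j0 := by
      rw [← hysum]
      exact Finset.sum_eq_single j0 (fun j _ hj => hyzero j hj) (fun h => absurd (Finset.mem_univ j0) h)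
    rw [this]
    exact hy j0
  · -- easy direction
    intro href φ hφW j
    rintro _ ⟨x, hx, rfl⟩
    choose σ hσ using href
    obtain ⟨y, hy, hysum⟩ := AL_exists_components W hWsup x
    set s := Finset.univ.filter (fun i => σ i = j) with hs
    have hzmem : ∑ i ∈ s, y i ∈ W' j := by
      refine Submodule.sum_mem _ fun i hi => ?_
      have : σ i = j := (Finset.mem_filter.mp hi).2
      exact this ▸ hσ i (hy i)
    have hdiff : x - ∑ i ∈ s, y i ∈ ⨆ (j') (_ : j' ≠ j), W' j' := by
      have : x - ∑ i ∈ s, y i = ∑ i ∈ Finset.univ \ s, y i := by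
        rw [← hysum, ← Finset.sum_sdiff (Finset.subset_univ s)]
        abel
      rw [this]
      refine Submodule.sum_mem _ fun i hi => ?_
      have hine : σ i ≠ j := by
        intro h
        exact (Finset.mem_sdiff.mp hi).2 (Finset.mem_filter.mpr ⟨Finset.mem_univ i, h⟩)
      exact (le_iSup₂ (f := fun (j' : J) (_ : j' ≠ j) => W' j') (σ i) hine) (hσ i (hy i))
    have hxz : x = ∑ i ∈ s, y i := by
      have h0 : x - ∑ i ∈ s, y i = 0 :=
        Submodule.disjoint_def.mp (hW'ind j) _ (sub_mem hx hzmem) hdiff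
      linear_combination (norm := abel) h0
    rw [hxz, map_sum]
    refine Submodule.sum_mem _ fun i hi => ?_
    have hσi : σ i = j := (Finset.mem_filter.mp hi).2
    have : φ (y i) ∈ W i := by
      rw [← hφW i]
      exact ⟨y i, hy i, rfl⟩
    exact hσi ▸ hσ i this
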